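/- Let x_n be the n-th largest order statistic of K i.i.d. Gamma(d,1) random variables. Then as t → 0⁺, P(x_n ≤ t) ∼ (K!/((K−n)!(n−1)!(K−n+1))) · (t^d/d!)^{K−n+1}; in particular P(x_n ≤ c/ρ) = Θ(ρ^{−d(K−n+1)}) as ρ → ∞ for any fixed c > 0. -/

import Mathlib

open MeasureTheory ProbabilityTheory Real Filter Asymptotics
open scoped ENNReal

lemma countP_eq_card_filter_univ {K : ℕ} (v : Fin K → ℝ) (t : ℝ) :
    (List.ofFn v).countP (fun x => decide (t < x)) = (Finset.univ.filter (fun i => t < v i)).card := by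
  rw [List.ofFn_eq_map, List.countP_map, Finset.card_filter, Fin.sum_univ_def]
  generalize List.finRange K = l
  induction l with
  | nil => simp
  | cons a l ih =>
      simp only [List.countP_cons, List.map_cons, List.sum_cons, ih]
      by_cases h : t < v a <;> simp [h] <;> omega

lemma sorted_get_le_iff {L : List ℝ} (hL : L.Pairwise (· ≥ ·)) {k : ℕ} (hk : k < L.length) (t : ℝ) :
    L.get ⟨k, hk⟩ ≤ t ↔ L.countP (fun x => decide (t < x)) ≤ k := by
  have hmono : ∀ i j : Fin L.length, i ≤ j → L.get j ≤ L.get i := fun i j hij =>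
    hL.rel_get_of_le hij
  constructor
  · intro h
    have h1 : L.countP (fun x => decide (t < x)) =
        (L.take k).countP (fun x => decide (t < x)) + (L.drop k).countP (fun x => decide (t < x)) := by
      rw [← List.countP_append, List.take_append_drop]
    have h2 : (L.drop k).countP (fun x => decide (t < x)) = 0 := by
      rw [List.countP_eq_zero]
      intro a ha
      obtain ⟨i, hi⟩ := List.mem_iff_get.mp ha
      have hki : k + i.1 < L.length := by
        have := i.2; simp [List.length_drop] at this; omega
      have ha' : a = L.get ⟨k + i.1, hki⟩ := by
        rw [← hi]; simp [List.get_eq_getElem, ← List.getElem_drop']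
      have : L.get ⟨k + i.1, hki⟩ ≤ L.get ⟨k, hk⟩ :=
        hmono ⟨k, hk⟩ ⟨k + i.1, hki⟩ (by simp [Fin.le_def])
      simp only [decide_eq_true_eq]
      push_neg
      rw [ha']
      exact le_trans this h
    calc L.countP (fun x => decide (t < x)) ≤ (L.take k).length := by
          rw [h1, h2]; simpa using (List.countP_le_length (l := L.take k) (p := fun x => decide (t < x)))
      _ ≤ k := by simp
  · intro h
    by_contra hc
    push_neg at hc
    have hall : ∀ a ∈ L.take (k+1), (fun x => decide (t < x)) a = true := by
      intro a ha
      obtain ⟨i, hi⟩ := List.mem_iff_get.mp ha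
      have hi2 : i.1 < L.length := by
        have := i.2; simp [List.length_take] at this; omega
      have ha' : a = L.get ⟨i.1, hi2⟩ := by
        rw [← hi]; simp [List.get_eq_getElem, ← List.getElem_take']
      have hik : i.1 ≤ k := by
        have := i.2; simp [List.length_take] at this; omega
      have : L.get ⟨k, hk⟩ ≤ L.get ⟨i.1, hi2⟩ :=
        hmono ⟨i.1, hi2⟩ ⟨k, hk⟩ (by simp [Fin.le_def, hik])
      simp only [decide_eq_true_eq]
      rw [ha']
      exact lt_of_lt_of_le hc this
    have h1 : (L.take (k+1)).countP (fun x => decide (t < x)) = (L.take (k+1)).length :=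
      List.countP_eq_length.mpr hall
    have h2 : (L.take (k+1)).length = k + 1 := by
      rw [List.length_take]; omega
    have := List.Sublist.countP_le (p := fun x => decide (t < x)) (List.take_sublist (k+1) L)
    omega

lemma orderStatDesc_le_iff' {K : ℕ} (v : Fin K → ℝ) (k : ℕ) (hk : k < K) (t : ℝ) :
    (((List.ofFn v).insertionSort (· ≥ ·)).get ⟨k, by simpa using hk⟩ ≤ t) ↔
      (Finset.univ.filter (fun i => t < v i)).card ≤ k := by
  rw [sorted_get_le_iff (List.pairwise_insertionSort _ _),
    (List.perm_insertionSort (· ≥ ·) (List.ofFn v)).countP_eq, countP_eq_card_filter_univ]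

lemma lint_poly (c : ℝ) (hc : 0 ≤ c) (d : ℕ) (hd : 1 ≤ d) (t : ℝ) (ht : 0 ≤ t) :
    ∫⁻ x in Set.Icc (0:ℝ) t, ENNReal.ofReal (c * x ^ (d-1) / (d-1).factorial)
      = ENNReal.ofReal (c * t ^ d / d.factorial) := by
  have hcont : Continuous (fun x : ℝ => c * x ^ (d-1) / (d-1).factorial) := by continuity
  rw [← ofReal_integral_eq_lintegral_ofReal (hcont.integrableOn_Icc)]
  · congr 1
    rw [MeasureTheory.integral_Icc_eq_integral_Ioc, ← intervalIntegral.integral_of_le ht]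
    have hrw : ∀ x : ℝ, c * x ^ (d-1) / (d-1).factorial = (c / (d-1).factorial) * x ^ (d-1) := by
      intro x; ring
    simp_rw [hrw, intervalIntegral.integral_const_mul, integral_pow]
    have hd1 : d - 1 + 1 = d := by omega
    rw [hd1]
    have hfac : (d.factorial : ℝ) = (d-1).factorial * d := by
      obtain ⟨e, rfl⟩ : ∃ e, d = e + 1 := ⟨d-1, by omega⟩
      simp [Nat.factorial_succ]
      push_cast
      ring
    rw [hfac]
    have h0 : (0:ℝ) ^ d = 0 := zero_pow (by omega)
    rw [h0]
    have hne1 : ((d-1).factorial : ℝ) ≠ 0 := by positivity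
    have hne2 : (d : ℝ) ≠ 0 := by positivity
    field_simp
    rw [Nat.cast_sub hd]; push_cast; ring
  · filter_upwards [self_mem_ae_restrict measurableSet_Icc] with x hx
    have : (0:ℝ) ≤ x := hx.1
    positivity

lemma pt_bounds (d : ℕ) (hd : 1 ≤ d) (t : ℝ) (ht : 0 ≤ t) :
    ENNReal.ofReal (Real.exp (-t) * t^d / d.factorial) ≤
      (volume.withDensity (fun x => Set.indicator (Set.Ici (0:ℝ))
        (fun x => ENNReal.ofReal (Real.exp (-x) * x ^ (d-1) / (d-1).factorial)) x)) (Set.Iic t)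
    ∧ (volume.withDensity (fun x => Set.indicator (Set.Ici (0:ℝ))
        (fun x => ENNReal.ofReal (Real.exp (-x) * x ^ (d-1) / (d-1).factorial)) x)) (Set.Iic t)
      ≤ ENNReal.ofReal (1 * t^d / d.factorial) := by
  have key : (volume.withDensity (fun x => Set.indicator (Set.Ici (0:ℝ))
        (fun x => ENNReal.ofReal (Real.exp (-x) * x ^ (d-1) / (d-1).factorial)) x)) (Set.Iic t)
      = ∫⁻ x in Set.Icc (0:ℝ) t, ENNReal.ofReal (Real.exp (-x) * x ^ (d-1) / (d-1).factorial) := by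
    rw [withDensity_apply _ measurableSet_Iic, lintegral_indicator measurableSet_Ici _,
      Measure.restrict_restrict measurableSet_Ici, Set.Ici_inter_Iic]
  rw [key]
  constructor
  · rw [← lint_poly (Real.exp (-t)) (Real.exp_nonneg _) d hd t ht]
    refine lintegral_mono_ae ?_
    filter_upwards [self_mem_ae_restrict measurableSet_Icc] with x hx
    refine ENNReal.ofReal_le_ofReal ?_
    have h1 : Real.exp (-t) ≤ Real.exp (-x) := Real.exp_le_exp.mpr (neg_le_neg hx.2)
    have h2 : (0:ℝ) ≤ x ^ (d-1) := pow_nonneg hx.1 _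
    have h3 : (0:ℝ) < (d-1).factorial := by positivity
    gcongr
  · rw [← lint_poly 1 zero_le_one d hd t ht]
    refine lintegral_mono_ae ?_
    filter_upwards [self_mem_ae_restrict measurableSet_Icc] with x hx
    refine ENNReal.ofReal_le_ofReal ?_
    have h1 : Real.exp (-x) ≤ 1 := Real.exp_le_one_iff.mpr (by linarith [hx.1])
    have h2 : (0:ℝ) ≤ x ^ (d-1) := pow_nonneg hx.1 _
    have h3 : (0:ℝ) < (d-1).factorial := by positivity
    gcongr

lemma prob_bounds {Ω : Type*} [MeasurableSpace Ω] (P : Measure Ω) [IsProbabilityMeasure P]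
    {K : ℕ} (X : Fin K → Ω → ℝ) (hXmeas : ∀ i, Measurable (X i))
    (hiid : iIndepFun X P)
    (t : ℝ) (pt : ℝ≥0∞) (hpt : ∀ i, P (X i ⁻¹' Set.Iic t) = pt) (m : ℕ) (hm : m ≤ K) :
    (K.choose m) * pt ^ m * (1 - pt) ^ (K - m) ≤
        P {ω | (Finset.univ.filter (fun i => t < X i ω)).card ≤ K - m}
    ∧ P {ω | (Finset.univ.filter (fun i => t < X i ω)).card ≤ K - m}
        ≤ (K.choose m) * pt ^ m := by
  set A : Fin K → Set Ω := fun i => X i ⁻¹' Set.Iic t with hA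
  have hAmeas : ∀ i, MeasurableSet (A i) := fun i => (hXmeas i) measurableSet_Iic
  have hAcomap : ∀ i, MeasurableSet[MeasurableSpace.comap (X i) inferInstance] (A i) :=
    fun i => ⟨Set.Iic t, measurableSet_Iic, rfl⟩
  have hAccomap : ∀ i, MeasurableSet[MeasurableSpace.comap (X i) inferInstance] (A i)ᶜ :=
    fun i => ⟨Set.Ioi t, measurableSet_Ioi, by rw [hA]; simp [← Set.preimage_compl]⟩
  have hPAc : ∀ i, P (A i)ᶜ = 1 - pt := fun i => by
    rw [prob_compl_eq_one_sub (hAmeas i), hpt i]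
  set E : Set Ω := {ω | (Finset.univ.filter (fun i => t < X i ω)).card ≤ K - m} with hE
  have hEmem : ∀ ω, ω ∈ E ↔ (Finset.univ.filter (fun i => t < X i ω)).card ≤ K - m :=
    fun ω => Iff.rfl
  have hcompl : ∀ ω, (Finset.univ.filter (fun i => ¬ t < X i ω)).card
      = K - (Finset.univ.filter (fun i => t < X i ω)).card := by
    intro ω
    have := Finset.card_filter_add_card_filter_not (s := Finset.univ)
      (p := fun i => t < X i ω)
    simp only [Finset.card_univ, Fintype.card_fin] at this
    omega
  have hcardpows : (Finset.powersetCard m (Finset.univ : Finset (Fin K))).card = K.choose m := by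
    rw [Finset.card_powersetCard, Finset.card_univ, Fintype.card_fin]
  constructor
  · -- lower bound
    set B : Finset (Fin K) → Set Ω := fun S => ⋂ i, (if i ∈ S then A i else (A i)ᶜ) with hB
    have hBmeas : ∀ S, MeasurableSet (B S) := by
      intro S
      refine MeasurableSet.iInter fun i => ?_
      split
      · exact hAmeas i
      · exact (hAmeas i).compl
    have hPB : ∀ S : Finset (Fin K), S.card = m → P (B S) = pt ^ m * (1 - pt) ^ (K - m) := by
      intro S hS
      have : P (B S) = ∏ i, P (if i ∈ S then A i else (A i)ᶜ) := by
        refine hiid.meas_iInter fun i => ?_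
        split
        · exact hAcomap i
        · exact hAccomap i
      rw [this]
      rw [← Finset.prod_filter_mul_prod_filter_not Finset.univ (· ∈ S)]
      have h1 : Finset.univ.filter (· ∈ S) = S := by
        ext i; simp
      have h2 : ∀ i ∈ S, P (if i ∈ S then A i else (A i)ᶜ) = pt := by
        intro i hi; rw [if_pos hi]; exact hpt i
      have h3 : ∀ i ∈ Finset.univ.filter (¬ · ∈ S), P (if i ∈ S then A i else (A i)ᶜ) = 1 - pt := by
        intro i hi
        simp only [Finset.mem_filter] at hi
        rw [if_neg hi.2]; exact hPAc i
      have h4 : (Finset.univ.filter (¬ · ∈ S)).card = K - m := by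
        rw [Finset.filter_not, h1, ← Finset.compl_eq_univ_sdiff, Finset.card_compl,
          Fintype.card_fin, hS]
      rw [h1, Finset.prod_congr rfl h2, Finset.prod_congr rfl h3,
        Finset.prod_const, Finset.prod_const, hS, h4]
    have hBsub : ∀ S ∈ Finset.powersetCard m (Finset.univ : Finset (Fin K)), B S ⊆ E := by
      intro S hS ω hω
      have hScard := Finset.mem_powersetCard_univ.mp hS
      have hsub2 : Finset.univ.filter (fun i => t < X i ω) ⊆ Sᶜ := by
        intro i hi
        simp only [Finset.mem_filter] at hi
        rw [Finset.mem_compl]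
        intro hiS
        have := Set.mem_iInter.mp hω i
        rw [if_pos hiS] at this
        exact absurd hi.2 (not_lt.mpr this)
      have := Finset.card_le_card hsub2
      rw [Finset.card_compl, Fintype.card_fin, hScard] at this
      exact (hEmem ω).mpr this
    have hdisj : Set.PairwiseDisjoint
        (↑(Finset.powersetCard m (Finset.univ : Finset (Fin K))) : Set (Finset (Fin K))) B := by
      intro S hS S' hS' hne
      have hcS := Finset.mem_powersetCard_univ.mp (Finset.mem_coe.mp hS)
      have hcS' := Finset.mem_powersetCard_univ.mp (Finset.mem_coe.mp hS')
      have : ¬ S ⊆ S' := fun hsub =>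
        hne (Finset.eq_of_subset_of_card_le hsub (by omega))
      obtain ⟨i, hiS, hiS'⟩ := Finset.not_subset.mp this
      refine Set.disjoint_left.mpr fun ω hω hω' => ?_
      have h1 := Set.mem_iInter.mp hω i
      have h2 := Set.mem_iInter.mp hω' i
      rw [if_pos hiS] at h1
      rw [if_neg hiS'] at h2
      exact h2 h1
    calc (K.choose m : ℝ≥0∞) * pt ^ m * (1 - pt) ^ (K - m)
        = ∑ S ∈ Finset.powersetCard m (Finset.univ : Finset (Fin K)), P (B S) := by
          rw [Finset.sum_congr rfl fun S hS => hPB S (Finset.mem_powersetCard_univ.mp hS),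
            Finset.sum_const, hcardpows, nsmul_eq_mul, mul_assoc]
      _ = P (⋃ S ∈ Finset.powersetCard m (Finset.univ : Finset (Fin K)), B S) :=
          (measure_biUnion_finset hdisj fun S _ => hBmeas S).symm
      _ ≤ P E := measure_mono (Set.iUnion₂_subset hBsub)
  · -- upper bound
    have hsub : E ⊆ ⋃ S ∈ Finset.powersetCard m (Finset.univ : Finset (Fin K)), ⋂ i ∈ S, A i := by
      intro ω hω
      have hcard : m ≤ (Finset.univ.filter (fun i => ¬ t < X i ω)).card := by
        rw [hcompl ω]
        have := hEmem ω |>.mp hω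
        omega
      obtain ⟨S, hSsub, hScard⟩ := Finset.exists_subset_card_eq hcard
      refine Set.mem_biUnion (Finset.mem_powersetCard_univ.mpr hScard)
        (Set.mem_iInter₂.mpr fun i hi => ?_)
      have := hSsub hi
      simp only [Finset.mem_filter] at this
      simpa [hA] using le_of_not_gt this.2
    calc P E ≤ P (⋃ S ∈ Finset.powersetCard m (Finset.univ : Finset (Fin K)), ⋂ i ∈ S, A i) :=
          measure_mono hsub
      _ ≤ ∑ S ∈ Finset.powersetCard m (Finset.univ : Finset (Fin K)), P (⋂ i ∈ S, A i) :=
          measure_biUnion_finset_le _ _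
      _ = ∑ S ∈ Finset.powersetCard m (Finset.univ : Finset (Fin K)), pt ^ m := by
          refine Finset.sum_congr rfl fun S hS => ?_
          rw [hiid.meas_biInter fun i _ => hAcomap i]
          rw [Finset.prod_congr rfl fun i _ => hpt i, Finset.prod_const,
            Finset.mem_powersetCard_univ.mp hS]
      _ = (K.choose m) * pt ^ m := by
          rw [Finset.sum_const, hcardpows, nsmul_eq_mul]

/-- The `k`-th largest value (0-indexed: `k = 0` is the largest) among `v 0, …, v (K-1)`. -/
noncomputable def orderStatDesc {K : ℕ} (v : Fin K → ℝ) (k : ℕ) (hk : k < K) : ℝ :=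
  ((List.ofFn v).insertionSort (· ≥ ·)).get ⟨k, by simpa using hk⟩

lemma orderStatDesc_le_iff {K : ℕ} (v : Fin K → ℝ) (k : ℕ) (hk : k < K) (t : ℝ) :
    orderStatDesc v k hk ≤ t ↔ (Finset.univ.filter (fun i => t < v i)).card ≤ k :=
  orderStatDesc_le_iff' v k hk t

/-- Tail of the `n`-th largest order statistic of `K` i.i.d. `Gamma(d,1)` samples:
`P(x_n ≤ t) ∼ (K!/((K-n)!(n-1)!(K-n+1))) (t^d/d!)^{K-n+1}` as `t → 0⁺`; in particular
`P(x_n ≤ c/ρ) = Θ(ρ^{-d(K-n+1)})` as `ρ → ∞` for any fixed `c > 0`. -/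
theorem order_statistic_small_tail_asymptotics
    {Ω : Type*} [MeasurableSpace Ω] (P : Measure Ω) [IsProbabilityMeasure P]
    (d K n : ℕ) (hd : 1 ≤ d) (hn1 : 1 ≤ n) (hnK : n ≤ K)
    (X : Fin K → Ω → ℝ) (hXmeas : ∀ i, Measurable (X i))
    (hiid : iIndepFun X P)
    (hdens : ∀ i, P.map (X i) = volume.withDensity (fun x =>
        Set.indicator (Set.Ici (0 : ℝ))
          (fun x => ENNReal.ofReal (Real.exp (-x) * x ^ (d - 1) / (d - 1).factorial)) x)) :
    Filter.Tendsto
      (fun t : ℝ =>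
        (P {ω | orderStatDesc (fun i => X i ω) (n - 1) (by omega) ≤ t}).toReal
          / ((K.factorial : ℝ) / ((K - n).factorial * (n - 1).factorial * (K - n + 1))
              * (t ^ d / d.factorial) ^ (K - n + 1)))
      (nhdsWithin 0 (Set.Ioi 0)) (nhds 1)
    ∧ ∀ c : ℝ, 0 < c →
      (fun ρ : ℝ =>
          (P {ω | orderStatDesc (fun i => X i ω) (n - 1) (by omega) ≤ c / ρ}).toReal)
        =Θ[Filter.atTop] fun ρ : ℝ => 1 / ρ ^ (d * (K - n + 1)) := by
  set m : ℕ := K - n + 1 with hm_def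
  have hmK : m ≤ K := by omega
  have hKm : K - m = n - 1 := by omega
  -- the common distribution
  set ν : Measure ℝ := volume.withDensity (fun x =>
      Set.indicator (Set.Ici (0 : ℝ))
        (fun x => ENNReal.ofReal (Real.exp (-x) * x ^ (d - 1) / (d - 1).factorial)) x) with hν
  have hpt : ∀ (t : ℝ) (i : Fin K), P (X i ⁻¹' Set.Iic t) = ν (Set.Iic t) := by
    intro t i
    rw [← Measure.map_apply (hXmeas i) measurableSet_Iic, hdens i]
  have i0 : Fin K := ⟨0, by omega⟩
  have hptle1 : ∀ t : ℝ, ν (Set.Iic t) ≤ 1 := fun t => by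
    rw [← hpt t i0]; exact prob_le_one
  have hptne : ∀ t : ℝ, ν (Set.Iic t) ≠ ⊤ := fun t => (lt_of_le_of_lt (hptle1 t) (by simp)).ne
  -- event rewriting
  have hEeq : ∀ t : ℝ, {ω | orderStatDesc (fun i => X i ω) (n - 1) (by omega) ≤ t}
      = {ω : Ω | (Finset.univ.filter (fun i => t < X i ω)).card ≤ K - m} := by
    intro t
    ext ω
    rw [Set.mem_setOf_eq, Set.mem_setOf_eq, orderStatDesc_le_iff, hKm]
  -- real quantities
  set p : ℝ → ℝ := fun t => (ν (Set.Iic t)).toReal with hp_def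
  have hp_nonneg : ∀ t, 0 ≤ p t := fun t => ENNReal.toReal_nonneg
  -- bounds on p for t ≥ 0
  have hp_ub : ∀ t : ℝ, 0 ≤ t → p t ≤ t ^ d / d.factorial := by
    intro t ht
    have h := (pt_bounds d hd t ht).2
    have := ENNReal.toReal_mono ENNReal.ofReal_ne_top h
    rwa [ENNReal.toReal_ofReal (by positivity), one_mul] at this
  have hp_lb : ∀ t : ℝ, 0 ≤ t → Real.exp (-t) * t ^ d / d.factorial ≤ p t := by
    intro t ht
    have h := (pt_bounds d hd t ht).1
    have := ENNReal.toReal_mono (hptne t) h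
    rwa [ENNReal.toReal_ofReal (by positivity)] at this
  -- probability bounds
  set C : ℝ := (K.choose m : ℝ) with hC_def
  have hCpos : 0 < C := by
    have := Nat.choose_pos hmK
    positivity
  have hPub : ∀ t : ℝ,
      (P {ω : Ω | (Finset.univ.filter (fun i => t < X i ω)).card ≤ K - m}).toReal
        ≤ C * p t ^ m := by
    intro t
    have h := (prob_bounds P X hXmeas hiid t (ν (Set.Iic t)) (hpt t) m hmK).2
    have hne : ((K.choose m : ℝ≥0∞) * ν (Set.Iic t) ^ m) ≠ ⊤ :=
      ENNReal.mul_ne_top (by simp) (ENNReal.pow_ne_top (hptne t))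
    have := ENNReal.toReal_mono hne h
    rwa [ENNReal.toReal_mul, ENNReal.toReal_pow, ENNReal.toReal_natCast] at this
  have hPlb : ∀ t : ℝ,
      C * p t ^ m * (1 - p t) ^ (K - m) ≤
        (P {ω : Ω | (Finset.univ.filter (fun i => t < X i ω)).card ≤ K - m}).toReal := by
    intro t
    have h := (prob_bounds P X hXmeas hiid t (ν (Set.Iic t)) (hpt t) m hmK).1
    have := ENNReal.toReal_mono (measure_ne_top P _) h
    rwa [ENNReal.toReal_mul, ENNReal.toReal_mul, ENNReal.toReal_pow, ENNReal.toReal_pow,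
      ENNReal.toReal_natCast, ENNReal.toReal_sub_of_le (hptle1 t) ENNReal.one_ne_top,
      ENNReal.toReal_one] at this
  -- the constant
  have hCeq : (K.factorial : ℝ) / ((K - n).factorial * (n - 1).factorial * (K - n + 1)) = C := by
    rw [hC_def, Nat.cast_choose ℝ hmK]
    congr 1
    have h1 : m.factorial = (K - n + 1) * (K - n).factorial := Nat.factorial_succ _
    rw [hKm, h1]
    push_cast [Nat.cast_sub hnK]
    ring
  -- part 1
  have part1 : Filter.Tendsto
      (fun t : ℝ =>
        (P {ω | orderStatDesc (fun i => X i ω) (n - 1) (by omega) ≤ t}).toReal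
          / ((K.factorial : ℝ) / ((K - n).factorial * (n - 1).factorial * (K - n + 1))
              * (t ^ d / d.factorial) ^ (K - n + 1)))
      (nhdsWithin 0 (Set.Ioi 0)) (nhds 1) := by
    have hfun : (fun t : ℝ =>
        (P {ω | orderStatDesc (fun i => X i ω) (n - 1) (by omega) ≤ t}).toReal
          / ((K.factorial : ℝ) / ((K - n).factorial * (n - 1).factorial * (K - n + 1))
              * (t ^ d / d.factorial) ^ (K - n + 1)))
        = (fun t : ℝ =>
        (P {ω : Ω | (Finset.univ.filter (fun i => t < X i ω)).card ≤ K - m}).toReal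
          / (C * (t ^ d / d.factorial) ^ m)) := by
      funext t
      rw [hEeq t, hCeq]
    rw [hfun]
    have hlow : Filter.Tendsto
        (fun t : ℝ => Real.exp (-t) ^ m * (1 - t ^ d / d.factorial) ^ (K - m))
        (nhdsWithin 0 (Set.Ioi 0)) (nhds 1) := by
      have hcont : Continuous (fun t : ℝ => Real.exp (-t) ^ m * (1 - t ^ d / d.factorial) ^ (K - m)) :=
        ((Real.continuous_exp.comp continuous_neg).pow m).mul
          ((continuous_const.sub ((continuous_pow d).div_const _)).pow _)
      have h := (hcont.tendsto 0).mono_left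
        (nhdsWithin_le_nhds : nhdsWithin (0:ℝ) (Set.Ioi 0) ≤ nhds 0)
      simpa [zero_pow (show d ≠ 0 by omega)] using h
    refine tendsto_of_tendsto_of_tendsto_of_le_of_le' hlow tendsto_const_nhds ?_ ?_
    · filter_upwards [Ioo_mem_nhdsGT_of_mem (Set.left_mem_Ico.mpr one_pos)] with t ht
      have ht0 : 0 < t := ht.1
      have ht1 : t < 1 := ht.2
      have htd : t ^ d / d.factorial ≤ 1 := by
        have h1 : t ^ d ≤ 1 := pow_le_one₀ ht0.le ht1.le
        have h2 : (1:ℝ) ≤ d.factorial := by exact_mod_cast Nat.one_le_iff_ne_zero.mpr d.factorial_ne_zero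
        calc t ^ d / d.factorial ≤ 1 / 1 := by
              apply div_le_div₀ (by norm_num) h1 one_pos h2
          _ = 1 := by norm_num
      have hdenpos : 0 < C * (t ^ d / d.factorial) ^ m := by positivity
      rw [le_div_iff₀ hdenpos]
      calc Real.exp (-t) ^ m * (1 - t ^ d / d.factorial) ^ (K - m) * (C * (t ^ d / d.factorial) ^ m)
          = C * (Real.exp (-t) * t ^ d / d.factorial) ^ m * (1 - t ^ d / d.factorial) ^ (K - m) := by
            rw [mul_div_assoc, mul_pow]
            ring
        _ ≤ C * p t ^ m * (1 - p t) ^ (K - m) := by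
            have h1 : (Real.exp (-t) * (t ^ d / d.factorial)) ^ m ≤ p t ^ m := by
              apply pow_le_pow_left₀ (by positivity)
              have := hp_lb t ht0.le
              rw [mul_div_assoc] at this
              exact this
            have h2 : (1 - t ^ d / d.factorial) ^ (K - m) ≤ (1 - p t) ^ (K - m) := by
              apply pow_le_pow_left₀ (by linarith)
              linarith [hp_ub t ht0.le]
            calc C * (Real.exp (-t) * t ^ d / d.factorial) ^ m * (1 - t ^ d / d.factorial) ^ (K - m)
                = C * (Real.exp (-t) * (t ^ d / d.factorial)) ^ m * (1 - t ^ d / d.factorial) ^ (K - m) := by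
                  rw [mul_div_assoc]
              _ ≤ C * p t ^ m * (1 - p t) ^ (K - m) := by
                  apply mul_le_mul _ h2 (pow_nonneg (by linarith) _) (by positivity)
                  exact mul_le_mul_of_nonneg_left h1 hCpos.le
        _ ≤ _ := hPlb t
    · filter_upwards [Ioo_mem_nhdsGT_of_mem (Set.left_mem_Ico.mpr one_pos)] with t ht
      have ht0 : 0 < t := ht.1
      have hdenpos : 0 < C * (t ^ d / d.factorial) ^ m := by positivity
      rw [div_le_one hdenpos]
      calc (P {ω : Ω | (Finset.univ.filter (fun i => t < X i ω)).card ≤ K - m}).toReal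
          ≤ C * p t ^ m := hPub t
        _ ≤ C * (t ^ d / d.factorial) ^ m := by
            apply mul_le_mul_of_nonneg_left _ hCpos.le
            exact pow_le_pow_left₀ (hp_nonneg t) (hp_ub t ht0.le) m
  refine ⟨part1, ?_⟩
  intro c hc
  -- composition
  have hcomp : Filter.Tendsto (fun ρ : ℝ => c / ρ) Filter.atTop (nhdsWithin 0 (Set.Ioi 0)) := by
    rw [tendsto_nhdsWithin_iff]
    constructor
    · exact Filter.Tendsto.div_atTop tendsto_const_nhds tendsto_id
    · filter_upwards [Filter.eventually_gt_atTop (0:ℝ)] with ρ hρ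
      exact Set.mem_Ioi.mpr (div_pos hc hρ)
  have h2 := part1.comp hcomp
  set g : ℝ → ℝ := fun ρ => (K.factorial : ℝ) / ((K - n).factorial * (n - 1).factorial * (K - n + 1))
      * ((c / ρ) ^ d / d.factorial) ^ (K - n + 1) with hg_def
  set f : ℝ → ℝ := fun ρ => (P {ω | orderStatDesc (fun i => X i ω) (n - 1) (by omega : n - 1 < K) ≤ c / ρ}).toReal with hf_def
  have hgne : ∀ᶠ ρ in Filter.atTop, g ρ ≠ 0 := by
    filter_upwards [Filter.eventually_gt_atTop (0:ℝ)] with ρ hρ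
    rw [hg_def, hCeq]
    have : 0 < c / ρ := div_pos hc hρ
    positivity
  have hequiv : f ~[Filter.atTop] g := by
    rw [isEquivalent_iff_tendsto_one hgne]
    exact h2
  have hΘ1 : f =Θ[Filter.atTop] g := hequiv.isTheta
  have hΘ2 : g =Θ[Filter.atTop] (fun ρ : ℝ => 1 / ρ ^ (d * (K - n + 1))) := by
    set k : ℝ := C * (c ^ d / d.factorial) ^ m with hk_def
    have hkpos : 0 < k := by
      rw [hk_def]; positivity
    have hgeq : g =ᶠ[Filter.atTop] (fun ρ : ℝ => k * (1 / ρ ^ (d * m))) := by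
      filter_upwards [Filter.eventually_gt_atTop (0:ℝ)] with ρ hρ
      simp only [hg_def, hCeq, hk_def]
      have hρ' : ρ ≠ 0 := hρ.ne'
      rw [hm_def]
      rw [div_pow c ρ d, pow_mul]
      have hfd : (d.factorial : ℝ) ≠ 0 := by positivity
      have hrd : (ρ : ℝ) ^ d ≠ 0 := pow_ne_zero _ hρ'
      field_simp
      have e : ∀ j : ℕ, ρ ^ j * ρ⁻¹ ^ j = 1 := fun j => by rw [← mul_pow, mul_inv_cancel₀ hρ', one_pow]
      linear_combination (c ^ d * c ^ (d * (K - n)) * (d.factorial : ℝ)⁻¹ * (d.factorial : ℝ)⁻¹ ^ (K - n) * (ρ ^ (d * (K - n)) * ρ⁻¹ ^ (d * (K - n)))) * e d + (c ^ d * c ^ (d * (K - n)) * (d.factorial : ℝ)⁻¹ * (d.factorial : ℝ)⁻¹ ^ (K - n)) * e (d * (K - n))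
    calc g =Θ[Filter.atTop] (fun ρ : ℝ => k * (1 / ρ ^ (d * m))) := hgeq.isTheta
      _ =Θ[Filter.atTop] (fun ρ : ℝ => 1 / ρ ^ (d * m)) :=
          (isTheta_const_mul_left hkpos.ne').mpr isTheta_rfl
  exact hΘ1.trans hΘ2
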